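/- The minor of the transpose A^T of the Bernstein–Vandermonde matrix formed by rows i, i+1, ..., i+j-1 and the first j columns equals C(n,i-1)·C(n,i)···C(n,i+j-2) · Π_{l=1}^{j} x_l^{i-1} · Π_{l=1}^{j}(1-x_l)^{n-i-j+2} · Π_{1 ≤ k < l ≤ j}(x_l - x_k). -/

import Mathlib

open Finset

lemma prod_fin_shift (j : ℕ) (f : ℕ → ℝ) :
    (∏ c : Fin j, f ((c : ℕ) + 1)) = ∏ l ∈ Icc 1 j, f l := by
  rw [Fin.prod_univ_eq_prod_range (fun m => f (m + 1)) j, ← Finset.Ico_add_one_right_eq_Icc,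
    Finset.prod_Ico_eq_prod_range]
  simp [add_comm]

lemma prod_fin_double (j : ℕ) (g : ℕ → ℕ → ℝ) :
    (∏ a : Fin j, ∏ b ∈ Ioi a, g (a : ℕ) (b : ℕ)) =
      ∏ k ∈ Icc 1 j, ∏ l ∈ Ioc k j, g (k - 1) (l - 1) := by
  have L : ∀ a : Fin j, (∏ b ∈ Ioi a, g (a : ℕ) (b : ℕ)) =
      ∏ b ∈ Ioc (a : ℕ) (j - 1), g (a : ℕ) b := by
    intro a
    rw [show Ioc (a : ℕ) (j - 1) = Ioo (a : ℕ) j from by ext m; simp only [Finset.mem_Ioc, Finset.mem_Ioo]; omega,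
      ← Fin.map_valEmbedding_Ioi, Finset.prod_map]
    rfl
  simp_rw [L]
  rw [Fin.prod_univ_eq_prod_range (fun m => ∏ b ∈ Ioc m (j - 1), g m b) j,
    ← Finset.Ico_add_one_right_eq_Icc, Finset.prod_Ico_eq_prod_range]
  refine Finset.prod_congr rfl fun a ha => ?_
  simp only [Finset.mem_range] at ha
  rw [← Finset.Ico_add_one_add_one_eq_Ioc, ← Finset.Ico_add_one_add_one_eq_Ioc, Finset.prod_Ico_eq_prod_range,
    Finset.prod_Ico_eq_prod_range]
  have h1 : j - 1 + 1 - (a + 1) = j + 1 - (1 + a + 1) := by omega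
  rw [h1]
  refine Finset.prod_congr rfl fun b hb => ?_
  simp only [Finset.mem_range] at hb
  congr 1 <;> omega

lemma bv_key_sum (j r : ℕ) (hr : r < j) (y : ℝ) :
    (∑ m ∈ range j, (if r ≤ m then
        ((-1 : ℝ) ^ (m - r) * (Nat.choose (j - 1 - r) (m - r) : ℝ)) else 0) * y ^ m) =
      (1 - y) ^ (j - 1 - r) * y ^ r := by
  simp only [ite_mul, zero_mul]
  rw [← Finset.sum_filter]
  have hs : (range j).filter (fun m => r ≤ m) = Ico r j := by
    ext m; simp only [Finset.mem_filter, Finset.mem_range, Finset.mem_Ico]; omega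
  rw [hs, Finset.sum_Ico_eq_sum_range]
  have hb : (1 - y) = -y + 1 := by ring
  rw [hb, add_pow]
  rw [show j - 1 - r + 1 = j - r from by omega, Finset.sum_mul]
  refine Finset.sum_congr rfl fun s hs => ?_
  simp only [Finset.mem_range] at hs
  rw [Nat.add_sub_cancel_left, one_pow, neg_pow, pow_add]
  ring

theorem bernstein_vandermonde_transpose_minor (n i j : ℕ) (x : ℕ → ℝ)
    (hi : 1 ≤ i) (hij : i + j ≤ n + 2) :
    (Matrix.of fun r c : Fin j =>
        (n.choose (i - 1 + (r : ℕ)) : ℝ) * (1 - x ((c : ℕ) + 1)) ^ (n - (i - 1 + (r : ℕ))) *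
          x ((c : ℕ) + 1) ^ (i - 1 + (r : ℕ))).det =
      (∏ r : Fin j, (n.choose (i - 1 + (r : ℕ)) : ℝ)) *
        (∏ l ∈ Finset.Icc 1 j, x l ^ (i - 1)) *
        (∏ l ∈ Finset.Icc 1 j, (1 - x l) ^ (n + 2 - i - j)) *
        ∏ k ∈ Finset.Icc 1 j, ∏ l ∈ Finset.Ioc k j, (x l - x k) := by
  set B : Matrix (Fin j) (Fin j) ℝ := Matrix.of fun r m : Fin j =>
    if (r : ℕ) ≤ (m : ℕ) then
      (-1 : ℝ) ^ ((m : ℕ) - (r : ℕ)) * (Nat.choose (j - 1 - (r : ℕ)) ((m : ℕ) - (r : ℕ)) : ℝ)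
    else 0 with hBdef
  set E : Matrix (Fin j) (Fin j) ℝ := Matrix.of fun r c : Fin j =>
    (1 - x ((c : ℕ) + 1)) ^ (j - 1 - (r : ℕ)) * x ((c : ℕ) + 1) ^ (r : ℕ) with hEdef
  -- Step 1: factor out row and column scalars
  have h1 : (Matrix.of fun r c : Fin j =>
        (n.choose (i - 1 + (r : ℕ)) : ℝ) * (1 - x ((c : ℕ) + 1)) ^ (n - (i - 1 + (r : ℕ))) *
          x ((c : ℕ) + 1) ^ (i - 1 + (r : ℕ)))
      = Matrix.of fun r c : Fin j => (n.choose (i - 1 + (r : ℕ)) : ℝ) *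
          (Matrix.of fun r c : Fin j =>
            (x ((c : ℕ) + 1) ^ (i - 1) * (1 - x ((c : ℕ) + 1)) ^ (n + 2 - i - j)) * E r c) r c := by
    ext r c
    have hr := r.isLt
    have e1 : n - (i - 1 + (r : ℕ)) = (n + 2 - i - j) + (j - 1 - (r : ℕ)) := by omega
    have e2 : i - 1 + (r : ℕ) = (i - 1) + (r : ℕ) := rfl
    simp only [Matrix.of_apply, hEdef]
    rw [e1, pow_add, e2, pow_add]
    ring
  rw [h1, Matrix.det_mul_column, Matrix.det_mul_row]
  -- Step 2: E = B * (vandermonde)ᵀ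
  have h2 : E = B * Matrix.transpose (Matrix.vandermonde fun c : Fin j => x ((c : ℕ) + 1)) := by
    ext r c
    rw [Matrix.mul_apply]
    simp only [Matrix.transpose_apply, Matrix.vandermonde, hBdef, hEdef, Matrix.of_apply]
    rw [Fin.sum_univ_eq_sum_range (fun m =>
      (if (r : ℕ) ≤ m then
        (-1 : ℝ) ^ (m - (r : ℕ)) * (Nat.choose (j - 1 - (r : ℕ)) (m - (r : ℕ)) : ℝ)
      else 0) * x ((c : ℕ) + 1) ^ m) j]
    exact (bv_key_sum j r r.isLt _).symm
  have hB : B.det = 1 := by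
    rw [Matrix.det_of_upperTriangular (fun a b h => by
      simp only [hBdef, Matrix.of_apply]
      rw [if_neg]
      exact fun hc => absurd (Fin.lt_iff_val_lt_val.mp h) (not_lt.mpr hc))]
    refine Finset.prod_eq_one fun a _ => ?_
    simp [hBdef]
  have h3 : E.det = ∏ a : Fin j, ∏ b ∈ Ioi a,
      (x ((b : ℕ) + 1) - x ((a : ℕ) + 1)) := by
    rw [h2, Matrix.det_mul, hB, one_mul, Matrix.det_transpose, Matrix.det_vandermonde]
  rw [h3]
  -- Step 3: convert products
  rw [show (∏ c : Fin j, x ((c : ℕ) + 1) ^ (i - 1) * (1 - x ((c : ℕ) + 1)) ^ (n + 2 - i - j))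
      = (∏ c : Fin j, x ((c : ℕ) + 1) ^ (i - 1)) *
        ∏ c : Fin j, (1 - x ((c : ℕ) + 1)) ^ (n + 2 - i - j) from Finset.prod_mul_distrib,
    prod_fin_shift j (fun l => x l ^ (i - 1)),
    prod_fin_shift j (fun l => (1 - x l) ^ (n + 2 - i - j)),
    prod_fin_double j (fun a b => x (b + 1) - x (a + 1))]
  rw [show (∏ k ∈ Icc 1 j, ∏ l ∈ Ioc k j, (x (l - 1 + 1) - x (k - 1 + 1)))
      = ∏ k ∈ Icc 1 j, ∏ l ∈ Ioc k j, (x l - x k) from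
    Finset.prod_congr rfl fun k hk => Finset.prod_congr rfl fun l hl => by
      simp only [Finset.mem_Icc] at hk
      simp only [Finset.mem_Ioc] at hl
      congr 2 <;> omega]
  ring
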